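/- Let f : ℝ³ → [0,∞) be measurable, not almost everywhere zero, with ∫_{ℝ³} |p| f(p) dp < ∞, let h ∈ ℝ³, and let m = min_{‖ξ‖=1} ∫_{ℝ³} |ξ·p| f(p) dp (> 0). Then for every C > 0, every positive definite B ∈ Sym3 with F(B) ≤ C satisfies det B ≥ 4/C² and every eigenvalue of B is at most C²/(256π²m²); consequently, the sublevel set {B ∈ Sym3 : B positive definite and F(B) ≤ C} is a compact subset of Sym3. -/

import Mathlib

open MeasureTheory Matrix Real Filter Topology Set Asymptotics

noncomputable section

/-- 3×3 real matrices; symmetric ones form `Sym3`, encoded via `Matrix.IsSymm`/`Matrix.PosDef`. -/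
abbrev Mat3 := Matrix (Fin 3) (Fin 3) ℝ

/-- vectors in ℝ³ -/
abbrev Vec3 := Fin 3 → ℝ

/-- Euclidean norm on ℝ³. -/
def enorm3 (p : Vec3) : ℝ := Real.sqrt (∑ i, p i ^ 2)

/-- the quadratic form pᵀBp. -/
def quadForm (B : Mat3) (p : Vec3) : ℝ := p ⬝ᵥ B.mulVec p

/-- Ψ(B)_{ij} = 4π (det B)^{1/2} ∫ (pᵀBp)^{−1/2} p_i p_j f(p) dp. -/
def PsiM (f : Vec3 → ℝ) (B : Mat3) : Mat3 :=
  Matrix.of fun i j =>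
    (4 * π) * Real.sqrt B.det * ∫ p : Vec3, (Real.sqrt (quadForm B p))⁻¹ * (p i * p j * f p)

/-- χ_b(k)_{ij} = 4π (det b)^{1/2} ∫ (pᵀbp)^{−3/2} ((bp)ᵀ k (bp)) p_i p_j f(p) dp. -/
def chiM (f : Vec3 → ℝ) (b : Mat3) (k : Mat3) : Mat3 :=
  Matrix.of fun i j =>
    (4 * π) * Real.sqrt b.det *
      ∫ p : Vec3, ((Real.sqrt (quadForm b p))⁻¹ ^ 3) * (quadForm k (b.mulVec p) * (p i * p j * f p))

/-- With u = ah, w = kh, α = hᵀah and b = a⁻¹: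
M_a(k) = (2/det a)((hᵀkh) a + α k − 2(u wᵀ + w uᵀ) + tr(bk)(2 u uᵀ − α a)). -/
def MM (a : Mat3) (h : Vec3) (k : Mat3) : Mat3 :=
  (2 / a.det) • ((h ⬝ᵥ k.mulVec h) • a + (h ⬝ᵥ a.mulVec h) • k
    - (2:ℝ) • (vecMulVec (a.mulVec h) (k.mulVec h) + vecMulVec (k.mulVec h) (a.mulVec h))
    + (a⁻¹ * k).trace • ((2:ℝ) • vecMulVec (a.mulVec h) (a.mulVec h) - (h ⬝ᵥ a.mulVec h) • a))

/-- The Fuchsian condition at B (with A = B⁻¹):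
2Ψ(B) = A − (2/det A)((hᵀAh) A − 2 (Ah)(Ah)ᵀ). -/
def FuchsCond (f : Vec3 → ℝ) (h : Vec3) (B : Mat3) : Prop :=
  (2:ℝ) • PsiM f B =
    B⁻¹ - (2 / (B⁻¹).det) •
      ((h ⬝ᵥ (B⁻¹).mulVec h) • B⁻¹ - (2:ℝ) • vecMulVec ((B⁻¹).mulVec h) ((B⁻¹).mulVec h))

/-- F(B) = 16π ∫ (pᵀBp)^{1/2} f dp + 2 (det B)^{−1/2} + 4 (det B)^{1/2} hᵀB⁻¹h. -/
def Ffun (f : Vec3 → ℝ) (h : Vec3) (B : Mat3) : ℝ :=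
  16 * π * (∫ p : Vec3, Real.sqrt (quadForm B p) * f p)
    + 2 * (Real.sqrt B.det)⁻¹ + 4 * Real.sqrt B.det * (h ⬝ᵥ (B⁻¹).mulVec h)

lemma enorm3_nonneg (p : Vec3) : 0 ≤ enorm3 p := Real.sqrt_nonneg _

lemma sum_sq_nonneg' (p : Vec3) : 0 ≤ ∑ i, p i ^ 2 :=
  Finset.sum_nonneg fun i _ => sq_nonneg _

lemma sq_enorm3 (p : Vec3) : enorm3 p ^ 2 = ∑ i, p i ^ 2 :=
  Real.sq_sqrt (sum_sq_nonneg' p)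

lemma enorm3_pos {p : Vec3} (hp : p ≠ 0) : 0 < enorm3 p := by
  rcases (enorm3_nonneg p).lt_or_eq with h | h
  · exact h
  · exfalso; apply hp
    have h2 : ∑ i, p i ^ 2 = 0 := by
      have := sq_enorm3 p; rw [← h] at this; simpa using this.symm
    funext i
    have := (Finset.sum_eq_zero_iff_of_nonneg (fun i _ => sq_nonneg (p i))).mp h2 i
      (Finset.mem_univ i)
    exact sq_eq_zero_iff.mp this

lemma enorm3_smul (c : ℝ) (p : Vec3) : enorm3 (c • p) = |c| * enorm3 p := by
  unfold enorm3
  have : ∑ i, (c • p) i ^ 2 = c ^ 2 * ∑ i, p i ^ 2 := by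
    simp [Pi.smul_apply, smul_eq_mul, mul_pow, Finset.mul_sum]
  rw [this, Real.sqrt_mul (sq_nonneg c), Real.sqrt_sq_eq_abs]

lemma abs_apply_le_enorm3 (p : Vec3) (i : Fin 3) : |p i| ≤ enorm3 p := by
  rw [← Real.sqrt_sq_eq_abs]
  exact Real.sqrt_le_sqrt (Finset.single_le_sum (fun j _ => sq_nonneg (p j))
    (Finset.mem_univ i))

lemma cs3 (x y : Vec3) : |x ⬝ᵥ y| ≤ enorm3 x * enorm3 y := by
  have h := Finset.sum_mul_sq_le_sq_mul_sq Finset.univ x y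
  have h2 : (x ⬝ᵥ y) ^ 2 ≤ (enorm3 x * enorm3 y) ^ 2 := by
    rw [mul_pow, sq_enorm3, sq_enorm3]; exact h
  calc |x ⬝ᵥ y| = Real.sqrt ((x ⬝ᵥ y) ^ 2) := (Real.sqrt_sq_eq_abs _).symm
    _ ≤ Real.sqrt ((enorm3 x * enorm3 y) ^ 2) := Real.sqrt_le_sqrt h2
    _ = enorm3 x * enorm3 y := Real.sqrt_sq (mul_nonneg (enorm3_nonneg x) (enorm3_nonneg y))

lemma quadForm_nonneg {B : Mat3} (hB : B.PosSemidef) (p : Vec3) : 0 ≤ quadForm B p := by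
  simpa [quadForm] using hB.dotProduct_mulVec_nonneg p

lemma transpose_eq_of_isHermitian {B : Mat3} (hB : B.IsHermitian) : Bᵀ = B := by
  have := hB
  unfold Matrix.IsHermitian at this
  rw [Matrix.conjTranspose] at this
  ext i j; have := congrFun (congrFun this i) j; simpa using this

lemma dot_mulVec_symm {B : Mat3} (hB : B.IsHermitian) (x y : Vec3) :
    x ⬝ᵥ B *ᵥ y = y ⬝ᵥ B *ᵥ x := by
  have ht := transpose_eq_of_isHermitian hB
  calc x ⬝ᵥ B *ᵥ y = x ᵥ* B ⬝ᵥ y := Matrix.dotProduct_mulVec x B y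
    _ = (Bᵀ *ᵥ x) ⬝ᵥ y := by rw [Matrix.mulVec_transpose]
    _ = (B *ᵥ x) ⬝ᵥ y := by rw [ht]
    _ = y ⬝ᵥ B *ᵥ x := dotProduct_comm _ _

lemma quadForm_smul (B : Mat3) (c : ℝ) (p : Vec3) :
    quadForm B (c • p) = c ^ 2 * quadForm B p := by
  simp only [quadForm, Matrix.mulVec_smul, smul_dotProduct, dotProduct_smul,
    smul_eq_mul]
  ring

lemma quadForm_add {B : Mat3} (hB : B.IsHermitian) (x y : Vec3) :
    quadForm B (x + y) = quadForm B x + 2 * (x ⬝ᵥ B *ᵥ y) + quadForm B y := by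
  have hsymm := dot_mulVec_symm hB x y
  simp only [quadForm, Matrix.mulVec_add, add_dotProduct, dotProduct_add]
  linarith

lemma quadForm_cs {B : Mat3} (hB : B.PosSemidef) (x y : Vec3) :
    (x ⬝ᵥ B *ᵥ y) ^ 2 ≤ quadForm B x * quadForm B y := by
  have key : ∀ t : ℝ, 0 ≤ quadForm B y * (t * t) + (2 * (x ⬝ᵥ B *ᵥ y)) * t + quadForm B x := by
    intro t
    have h0 := quadForm_nonneg hB (x + t • y)
    have he : quadForm B (x + t • y)
        = quadForm B y * (t * t) + (2 * (x ⬝ᵥ B *ᵥ y)) * t + quadForm B x := by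
      rw [quadForm_add hB.1 x (t • y), quadForm_smul]
      have : x ⬝ᵥ B *ᵥ (t • y) = t * (x ⬝ᵥ B *ᵥ y) := by
        rw [Matrix.mulVec_smul, dotProduct_smul]; simp
      rw [this]; ring
    linarith [he ▸ h0]
  have hd := discrim_le_zero key
  unfold discrim at hd
  nlinarith [hd]

lemma mulVec_eq_zero_of_quadForm_eq_zero {B : Mat3} (hB : B.PosSemidef) {x : Vec3}
    (hq : quadForm B x = 0) : B *ᵥ x = 0 := by
  rw [← dotProduct_self_eq_zero (v := B *ᵥ x)]
  have h := quadForm_cs hB (B *ᵥ x) x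
  rw [hq, mul_zero] at h
  exact sq_eq_zero_iff.mp (le_antisymm h (sq_nonneg _))

lemma posDef_of_posSemidef_det_ne_zero {B : Mat3} (hB : B.PosSemidef) (hd : B.det ≠ 0) :
    B.PosDef := by
  refine Matrix.PosDef.of_dotProduct_mulVec_pos hB.1 fun x hx => ?_
  have hnn := hB.dotProduct_mulVec_nonneg x
  rcases hnn.lt_or_eq with h | h
  · simpa using h
  · exfalso
    have hq : quadForm B x = 0 := by simpa [quadForm] using h.symm
    have hz := mulVec_eq_zero_of_quadForm_eq_zero hB hq
    apply hx
    have : (B⁻¹ * B) *ᵥ x = x := by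
      rw [Matrix.nonsing_inv_mul B (isUnit_iff_ne_zero.mpr hd), Matrix.one_mulVec]
    rw [← this, ← Matrix.mulVec_mulVec, hz, Matrix.mulVec_zero]

lemma quadForm_le_entries (B : Mat3) (p : Vec3) :
    quadForm B p ≤ (∑ i, ∑ j, |B i j|) * enorm3 p ^ 2 := by
  have habs := abs_apply_le_enorm3 p
  have h1 : quadForm B p = ∑ i, ∑ j, p i * (B i j * p j) := by
    simp [quadForm, dotProduct, Matrix.mulVec, Finset.mul_sum]
  rw [h1]
  calc ∑ i, ∑ j, p i * (B i j * p j)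
      ≤ ∑ i, ∑ j, |B i j| * (enorm3 p * enorm3 p) := by
        apply Finset.sum_le_sum; intro i _; apply Finset.sum_le_sum; intro j _
        have h2 : p i * (B i j * p j) ≤ |p i| * (|B i j| * |p j|) := by
          calc p i * (B i j * p j) ≤ |p i * (B i j * p j)| := le_abs_self _
            _ = |p i| * (|B i j| * |p j|) := by rw [abs_mul, abs_mul]
        refine h2.trans ?_
        have h3 : |p i| * (|B i j| * |p j|) ≤ enorm3 p * (|B i j| * enorm3 p) :=
          mul_le_mul (habs i) (mul_le_mul_of_nonneg_left (habs j) (abs_nonneg _))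
            (by positivity) (enorm3_nonneg p)
        refine h3.trans_eq (by ring)
    _ = (∑ i, ∑ j, |B i j|) * enorm3 p ^ 2 := by
        simp only [← Finset.sum_mul]; ring

lemma aesm_sqrt (f : Vec3 → ℝ) (hmeas : Measurable f) (B : Mat3) :
    AEStronglyMeasurable (fun p : Vec3 => Real.sqrt (quadForm B p) * f p) volume := by
  apply AEStronglyMeasurable.mul _ hmeas.aestronglyMeasurable
  exact (Real.continuous_sqrt.comp (Continuous.dotProduct continuous_id
    (Continuous.matrix_mulVec continuous_const continuous_id))).aestronglyMeasurable

lemma sqrt_quadForm_le (B : Mat3) (p : Vec3) {K : ℝ} (hK : 0 ≤ K)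
    (hq : quadForm B p ≤ K * enorm3 p ^ 2) :
    Real.sqrt (quadForm B p) ≤ Real.sqrt K * enorm3 p := by
  calc Real.sqrt (quadForm B p) ≤ Real.sqrt (K * enorm3 p ^ 2) := Real.sqrt_le_sqrt hq
    _ = Real.sqrt K * Real.sqrt (enorm3 p ^ 2) := Real.sqrt_mul hK _
    _ = Real.sqrt K * enorm3 p := by rw [Real.sqrt_sq (enorm3_nonneg p)]

lemma integrable_sqrt_quadForm (f : Vec3 → ℝ) (hmeas : Measurable f)
    (hnonneg : ∀ p, 0 ≤ f p) (hint : Integrable (fun p : Vec3 => enorm3 p * f p)) (B : Mat3) :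
    Integrable (fun p : Vec3 => Real.sqrt (quadForm B p) * f p) := by
  set K := ∑ i, ∑ j, |B i j| with hKdef
  have hK : 0 ≤ K := Finset.sum_nonneg fun i _ => Finset.sum_nonneg fun j _ => abs_nonneg _
  refine (hint.const_mul (Real.sqrt K)).mono' (aesm_sqrt f hmeas B) ?_
  filter_upwards with p
  rw [Real.norm_eq_abs, abs_of_nonneg (mul_nonneg (Real.sqrt_nonneg _) (hnonneg p))]
  calc Real.sqrt (quadForm B p) * f p
      ≤ (Real.sqrt K * enorm3 p) * f p :=
        mul_le_mul_of_nonneg_right (sqrt_quadForm_le B p hK (quadForm_le_entries B p)) (hnonneg p)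
    _ = Real.sqrt K * (enorm3 p * f p) := by ring

lemma integrable_absdot (f : Vec3 → ℝ) (hmeas : Measurable f)
    (hnonneg : ∀ p, 0 ≤ f p) (hint : Integrable (fun p : Vec3 => enorm3 p * f p)) (w : Vec3) :
    Integrable (fun p : Vec3 => |w ⬝ᵥ p| * f p) := by
  refine (hint.const_mul (enorm3 w)).mono' ?_ ?_
  · exact ((continuous_abs.comp (Continuous.dotProduct continuous_const
      continuous_id)).aestronglyMeasurable).mul hmeas.aestronglyMeasurable
  · filter_upwards with p
    rw [Real.norm_eq_abs, abs_of_nonneg (mul_nonneg (abs_nonneg _) (hnonneg p))]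
    calc |w ⬝ᵥ p| * f p ≤ (enorm3 w * enorm3 p) * f p :=
        mul_le_mul_of_nonneg_right (cs3 w p) (hnonneg p)
      _ = enorm3 w * (enorm3 p * f p) := by ring

lemma integral_sqrt_nonneg (f : Vec3 → ℝ) (hnonneg : ∀ p, 0 ≤ f p) (B : Mat3) :
    0 ≤ ∫ p : Vec3, Real.sqrt (quadForm B p) * f p :=
  integral_nonneg fun p => mul_nonneg (Real.sqrt_nonneg _) (hnonneg p)

lemma Ffun_term1_le (f : Vec3 → ℝ) (h : Vec3) (hnonneg : ∀ p, 0 ≤ f p)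
    {B : Mat3} (hB : B.PosDef) {C : ℝ} (hF : Ffun f h B ≤ C) :
    16 * π * (∫ p : Vec3, Real.sqrt (quadForm B p) * f p) ≤ C := by
  have hdet : 0 < Real.sqrt B.det := Real.sqrt_pos.mpr hB.det_pos
  have hinv : 0 ≤ h ⬝ᵥ B⁻¹ *ᵥ h := quadForm_nonneg hB.inv.posSemidef h
  have h4 : 0 ≤ 4 * Real.sqrt B.det * (h ⬝ᵥ B⁻¹ *ᵥ h) :=
    mul_nonneg (by positivity) hinv
  have h2 : 0 < (Real.sqrt B.det)⁻¹ := inv_pos.mpr hdet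
  unfold Ffun at hF
  linarith

lemma Ffun_det_lower (f : Vec3 → ℝ) (h : Vec3) (hnonneg : ∀ p, 0 ≤ f p)
    {B : Mat3} (hB : B.PosDef) {C : ℝ} (hC : 0 < C) (hF : Ffun f h B ≤ C) :
    4 / C ^ 2 ≤ B.det := by
  have hdet : 0 < B.det := hB.det_pos
  have hs : 0 < Real.sqrt B.det := Real.sqrt_pos.mpr hdet
  have hinv : 0 ≤ h ⬝ᵥ B⁻¹ *ᵥ h := quadForm_nonneg hB.inv.posSemidef h
  have hI : 0 ≤ ∫ p : Vec3, Real.sqrt (quadForm B p) * f p :=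
    integral_sqrt_nonneg f hnonneg B
  have h2 : 2 * (Real.sqrt B.det)⁻¹ ≤ C := by
    unfold Ffun at hF
    nlinarith [Real.pi_pos]
  set s := Real.sqrt B.det with hsdef
  have hsC : 2 ≤ C * s := by
    have := mul_le_mul_of_nonneg_right h2 hs.le
    rwa [mul_assoc, inv_mul_cancel₀ hs.ne', mul_one] at this
  have hdet_eq : B.det = s ^ 2 := (Real.sq_sqrt hdet.le).symm
  rw [hdet_eq, div_le_iff₀ (by positivity)]
  nlinarith [hsC, hs, hC]

/-- key bound : quadratic form at unit vectors is bounded on the sublevel set. -/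
lemma key_bound (f : Vec3 → ℝ) (h : Vec3) (m : ℝ)
    (hmeas : Measurable f) (hnonneg : ∀ p, 0 ≤ f p)
    (hint : Integrable (fun p : Vec3 => enorm3 p * f p))
    (hm : IsLeast ((fun ξ : Vec3 => ∫ p : Vec3, |ξ ⬝ᵥ p| * f p) '' {ξ : Vec3 | enorm3 ξ = 1}) m)
    (hmpos : 0 < m) {C : ℝ} (hC : 0 < C)
    {B : Mat3} (hB : B.PosDef) (hF : Ffun f h B ≤ C)
    {ξ : Vec3} (hξ : enorm3 ξ = 1) :
    quadForm B ξ ≤ C ^ 2 / (256 * π ^ 2 * m ^ 2) := by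
  have hRHSpos : 0 < C ^ 2 / (256 * π ^ 2 * m ^ 2) := by positivity
  have hI1 : 16 * π * (∫ p : Vec3, Real.sqrt (quadForm B p) * f p) ≤ C :=
    Ffun_term1_le f h hnonneg hB hF
  set I := ∫ p : Vec3, Real.sqrt (quadForm B p) * f p with hIdef
  have hInn : 0 ≤ I := integral_sqrt_nonneg f hnonneg B
  set w := B *ᵥ ξ with hwdef
  set q := quadForm B ξ with hqdef
  have hq0 : 0 ≤ q := quadForm_nonneg hB.posSemidef ξ
  by_cases hw : w = 0
  · have : q = 0 := by
      rw [hqdef]; unfold quadForm; rw [← hwdef, hw, dotProduct_zero]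
    rw [this]; exact hRHSpos.le
  · have hwn : 0 < enorm3 w := enorm3_pos hw
    set η := (enorm3 w)⁻¹ • w with hηdef
    have hη : enorm3 η = 1 := by
      rw [hηdef, enorm3_smul, abs_of_nonneg (inv_nonneg.mpr hwn.le), inv_mul_cancel₀ hwn.ne']
    have hmle : m ≤ ∫ p : Vec3, |η ⬝ᵥ p| * f p := hm.2 ⟨η, hη, rfl⟩
    have heq : (∫ p : Vec3, |η ⬝ᵥ p| * f p) = (enorm3 w)⁻¹ * ∫ p : Vec3, |w ⬝ᵥ p| * f p := by
      rw [← integral_const_mul]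
      congr 1; funext p
      rw [hηdef, smul_dotProduct, smul_eq_mul, abs_mul,
        abs_of_nonneg (inv_nonneg.mpr hwn.le)]
      ring
    have hwI : m * enorm3 w ≤ ∫ p : Vec3, |w ⬝ᵥ p| * f p := by
      rw [heq] at hmle
      calc m * enorm3 w ≤ ((enorm3 w)⁻¹ * ∫ p : Vec3, |w ⬝ᵥ p| * f p) * enorm3 w :=
            mul_le_mul_of_nonneg_right hmle hwn.le
        _ = ∫ p : Vec3, |w ⬝ᵥ p| * f p := by field_simp
    -- pointwise CS bound
    have hpt : ∀ p : Vec3, |w ⬝ᵥ p| * f p ≤ Real.sqrt q * (Real.sqrt (quadForm B p) * f p) := by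
      intro p
      have hsymm : w ⬝ᵥ p = ξ ⬝ᵥ B *ᵥ p := by
        rw [hwdef, dotProduct_comm]
        exact (dot_mulVec_symm hB.1 p ξ)
      have hcs : (ξ ⬝ᵥ B *ᵥ p) ^ 2 ≤ q * quadForm B p := quadForm_cs hB.posSemidef ξ p
      have habs : |w ⬝ᵥ p| ≤ Real.sqrt q * Real.sqrt (quadForm B p) := by
        rw [hsymm, ← Real.sqrt_sq_eq_abs]
        calc Real.sqrt ((ξ ⬝ᵥ B *ᵥ p) ^ 2) ≤ Real.sqrt (q * quadForm B p) :=
              Real.sqrt_le_sqrt hcs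
          _ = Real.sqrt q * Real.sqrt (quadForm B p) :=
              Real.sqrt_mul hq0 _
      calc |w ⬝ᵥ p| * f p ≤ (Real.sqrt q * Real.sqrt (quadForm B p)) * f p :=
            mul_le_mul_of_nonneg_right habs (hnonneg p)
        _ = Real.sqrt q * (Real.sqrt (quadForm B p) * f p) := by ring
    have hInt2 : Integrable (fun p : Vec3 => Real.sqrt q * (Real.sqrt (quadForm B p) * f p)) :=
      (integrable_sqrt_quadForm f hmeas hnonneg hint B).const_mul _
    have hII : (∫ p : Vec3, |w ⬝ᵥ p| * f p) ≤ Real.sqrt q * I := by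
      rw [hIdef, ← integral_const_mul]
      exact integral_mono_of_nonneg
        (Filter.Eventually.of_forall fun p => mul_nonneg (abs_nonneg _) (hnonneg p))
        hInt2 (Filter.Eventually.of_forall hpt)
    have hqw : q ≤ enorm3 w := by
      have : q = ξ ⬝ᵥ w := rfl
      calc q = ξ ⬝ᵥ w := this
        _ ≤ |ξ ⬝ᵥ w| := le_abs_self _
        _ ≤ enorm3 ξ * enorm3 w := cs3 ξ w
        _ = enorm3 w := by rw [hξ, one_mul]
    -- combine
    have hch : m * q ≤ Real.sqrt q * (C / (16 * π)) := by
      have hIle : I ≤ C / (16 * π) := by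
        rw [le_div_iff₀ (by positivity)]; linarith [hI1]
      calc m * q ≤ m * enorm3 w := mul_le_mul_of_nonneg_left hqw hmpos.le
        _ ≤ ∫ p : Vec3, |w ⬝ᵥ p| * f p := hwI
        _ ≤ Real.sqrt q * I := hII
        _ ≤ Real.sqrt q * (C / (16 * π)) :=
            mul_le_mul_of_nonneg_left hIle (Real.sqrt_nonneg _)
    set s := Real.sqrt q with hsdef
    have hs0 : 0 ≤ s := Real.sqrt_nonneg _
    have hqs : q = s ^ 2 := (Real.sq_sqrt hq0).symm
    rcases hs0.lt_or_eq with hs | hs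
    · have hD : m * s ≤ C / (16 * π) := by
        have h1 : (m * s) * s ≤ (C / (16 * π)) * s := by
          rw [hqs] at hch; nlinarith [hch]
        exact le_of_mul_le_mul_right h1 hs
      have h16 : (0:ℝ) < 16 * π := by positivity
      rw [le_div_iff₀ h16] at hD
      have hsle : s ≤ C / (16 * π * m) := by
        rw [le_div_iff₀ (by positivity)]
        nlinarith [hD]
      rw [hqs]
      calc s ^ 2 ≤ (C / (16 * π * m)) ^ 2 := by nlinarith [hs, hsle]
        _ = C ^ 2 / (256 * π ^ 2 * m ^ 2) := by
            rw [div_pow]; congr 1; ring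
    · rw [hqs, ← hs]; simpa using hRHSpos.le

lemma key_bound_all (f : Vec3 → ℝ) (h : Vec3) (m : ℝ)
    (hmeas : Measurable f) (hnonneg : ∀ p, 0 ≤ f p)
    (hint : Integrable (fun p : Vec3 => enorm3 p * f p))
    (hm : IsLeast ((fun ξ : Vec3 => ∫ p : Vec3, |ξ ⬝ᵥ p| * f p) '' {ξ : Vec3 | enorm3 ξ = 1}) m)
    (hmpos : 0 < m) {C : ℝ} (hC : 0 < C)
    {B : Mat3} (hB : B.PosDef) (hF : Ffun f h B ≤ C) (p : Vec3) :
    quadForm B p ≤ (C ^ 2 / (256 * π ^ 2 * m ^ 2)) * enorm3 p ^ 2 := by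
  by_cases hp : p = 0
  · simp [hp, quadForm, enorm3]
  · have hpn : 0 < enorm3 p := enorm3_pos hp
    set ξ := (enorm3 p)⁻¹ • p with hξdef
    have hξ : enorm3 ξ = 1 := by
      rw [hξdef, enorm3_smul, abs_of_nonneg (inv_nonneg.mpr hpn.le), inv_mul_cancel₀ hpn.ne']
    have hb := key_bound f h m hmeas hnonneg hint hm hmpos hC hB hF hξ
    have hsm : quadForm B ξ = ((enorm3 p)⁻¹) ^ 2 * quadForm B p := by
      rw [hξdef, quadForm_smul]
    have heq : quadForm B p = enorm3 p ^ 2 * quadForm B ξ := by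
      rw [hsm]; field_simp
    rw [heq]
    calc enorm3 p ^ 2 * quadForm B ξ
        ≤ enorm3 p ^ 2 * (C ^ 2 / (256 * π ^ 2 * m ^ 2)) :=
          mul_le_mul_of_nonneg_left hb (sq_nonneg _)
      _ = (C ^ 2 / (256 * π ^ 2 * m ^ 2)) * enorm3 p ^ 2 := by ring

lemma dotProduct_self_eq_sq (v : Vec3) : v ⬝ᵥ v = ∑ i, v i ^ 2 := by
  simp [dotProduct, sq]

lemma eig_bound (f : Vec3 → ℝ) (h : Vec3) (m : ℝ)
    (hmeas : Measurable f) (hnonneg : ∀ p, 0 ≤ f p)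
    (hint : Integrable (fun p : Vec3 => enorm3 p * f p))
    (hm : IsLeast ((fun ξ : Vec3 => ∫ p : Vec3, |ξ ⬝ᵥ p| * f p) '' {ξ : Vec3 | enorm3 ξ = 1}) m)
    (hmpos : 0 < m) {C : ℝ} (hC : 0 < C)
    {B : Mat3} (hB : B.PosDef) (hF : Ffun f h B ≤ C)
    {μ : ℝ} {v : Vec3} (hv0 : v ≠ 0) (hv : B *ᵥ v = μ • v) :
    μ ≤ C ^ 2 / (256 * π ^ 2 * m ^ 2) := by
  have hvn : 0 < enorm3 v := enorm3_pos hv0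
  have hq : quadForm B v = μ * enorm3 v ^ 2 := by
    unfold quadForm
    rw [hv, dotProduct_smul, smul_eq_mul, sq_enorm3, dotProduct_self_eq_sq]
  have hball := key_bound_all f h m hmeas hnonneg hint hm hmpos hC hB hF v
  rw [hq] at hball
  exact le_of_mul_le_mul_right hball (by positivity)

lemma enorm3_single (i : Fin 3) : enorm3 (Pi.single i (1:ℝ)) = 1 := by
  have : ∑ j, (Pi.single i (1:ℝ) : Vec3) j ^ 2 = (1:ℝ) := by
    rw [Finset.sum_eq_single i]
    · simp
    · intro j _ hj; simp [Pi.single_apply, hj]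
    · simp
  rw [enorm3, this, Real.sqrt_one]

lemma dot_single (B : Mat3) (i j : Fin 3) :
    Pi.single i (1:ℝ) ⬝ᵥ B *ᵥ Pi.single j 1 = B i j := by
  rw [Matrix.mulVec_single]
  simp [dotProduct, Pi.single_apply]

lemma entry_bound (f : Vec3 → ℝ) (h : Vec3) (m : ℝ)
    (hmeas : Measurable f) (hnonneg : ∀ p, 0 ≤ f p)
    (hint : Integrable (fun p : Vec3 => enorm3 p * f p))
    (hm : IsLeast ((fun ξ : Vec3 => ∫ p : Vec3, |ξ ⬝ᵥ p| * f p) '' {ξ : Vec3 | enorm3 ξ = 1}) m)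
    (hmpos : 0 < m) {C : ℝ} (hC : 0 < C)
    {B : Mat3} (hB : B.PosDef) (hF : Ffun f h B ≤ C) (i j : Fin 3) :
    |B i j| ≤ C ^ 2 / (256 * π ^ 2 * m ^ 2) := by
  set K := C ^ 2 / (256 * π ^ 2 * m ^ 2) with hKdef
  have hdiag : ∀ k, 0 ≤ B k k ∧ B k k ≤ K := by
    intro k
    have h1 := key_bound f h m hmeas hnonneg hint hm hmpos hC hB hF (ξ := Pi.single k (1:ℝ)) (enorm3_single k)
    have h2 : quadForm B (Pi.single k 1) = B k k := dot_single B k k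
    have h3 := quadForm_nonneg hB.posSemidef (Pi.single k 1)
    rw [h2] at h1 h3
    exact ⟨h3, h1⟩
  by_cases hij : i = j
  · subst hij
    rw [abs_of_nonneg (hdiag i).1]; exact (hdiag i).2
  · set u : Vec3 := Pi.single i (1:ℝ) with hu
    set v : Vec3 := Pi.single j (1:ℝ) with hvv
    have hdots : u ⬝ᵥ B *ᵥ v = B i j := dot_single B i j
    have hquu : quadForm B u = B i i := dot_single B i i
    have hqvv : quadForm B v = B j j := dot_single B j j
    have hplus : 0 ≤ B i i + 2 * B i j + B j j := by
      have h0 := quadForm_nonneg hB.posSemidef (u + v)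
      rw [quadForm_add hB.1 u v, hdots, hquu, hqvv] at h0
      linarith
    have hminus : 0 ≤ B i i - 2 * B i j + B j j := by
      have h0 := quadForm_nonneg hB.posSemidef (u + (-1 : ℝ) • v)
      rw [quadForm_add hB.1 u ((-1 : ℝ) • v), quadForm_smul] at h0
      have hdm : u ⬝ᵥ B *ᵥ ((-1 : ℝ) • v) = -(B i j) := by
        rw [Matrix.mulVec_smul, dotProduct_smul, hdots]; simp
      rw [hdm] at h0
      simp only [neg_one_sq, one_mul, hquu, hqvv] at h0
      linarith
    have hii := hdiag i
    have hjj := hdiag j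
    rw [abs_le]
    constructor <;> linarith

/-- sublevel sets of F are bounded (det from below, eigenvalues from above)
and compact. -/
theorem Ffun_sublevel_compact (f : Vec3 → ℝ) (h : Vec3) (m : ℝ)
    (hmeas : Measurable f) (hnonneg : ∀ p, 0 ≤ f p)
    (hne : ¬ f =ᵐ[volume] 0)
    (hint : Integrable (fun p : Vec3 => enorm3 p * f p))
    (hm : IsLeast ((fun ξ : Vec3 => ∫ p : Vec3, |ξ ⬝ᵥ p| * f p) '' {ξ : Vec3 | enorm3 ξ = 1}) m)
    (hmpos : 0 < m) :
    ∀ C : ℝ, 0 < C →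
      (∀ B : Mat3, B.PosDef → Ffun f h B ≤ C →
        4 / C ^ 2 ≤ B.det ∧
        ∀ (μ : ℝ) (v : Vec3), v ≠ 0 → B.mulVec v = μ • v →
          μ ≤ C ^ 2 / (256 * π ^ 2 * m ^ 2)) ∧
      IsCompact {B : Mat3 | B.PosDef ∧ Ffun f h B ≤ C} := by
  intro C hC
  constructor
  · intro B hB hF
    exact ⟨Ffun_det_lower f h hnonneg hB hC hF,
      fun μ v hv0 hv => eig_bound f h m hmeas hnonneg hint hm hmpos hC hB hF hv0 hv⟩
  · set K := C ^ 2 / (256 * π ^ 2 * m ^ 2) with hKdef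
    have hbox : IsCompact {B : Mat3 | ∀ i j, B i j ∈ Set.Icc (-K) K} := by
      have : {B : Mat3 | ∀ i j, B i j ∈ Set.Icc (-K) K}
          = Set.pi Set.univ (fun _ : Fin 3 => Set.pi Set.univ (fun _ : Fin 3 => Set.Icc (-K) K)) := by
        ext B
        constructor
        · intro hb i _ j _
          exact hb i j
        · intro hb i j
          exact hb i (Set.mem_univ i) j (Set.mem_univ j)
      rw [this]
      exact isCompact_univ_pi fun i => isCompact_univ_pi fun j => isCompact_Icc
    apply IsCompact.of_isClosed_subset hbox
    · -- closedness
      haveI : SequentialSpace Mat3 := inferInstanceAs (SequentialSpace (Fin 3 → Fin 3 → ℝ))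
      apply IsSeqClosed.isClosed
      intro Bseq B hmem htend
      have hqtend : ∀ x : Vec3, Tendsto (fun n => quadForm (Bseq n) x) atTop (𝓝 (quadForm B x)) := by
        intro x
        have hcont : Continuous fun A : Mat3 => quadForm A x :=
          Continuous.dotProduct continuous_const
            (Continuous.matrix_mulVec continuous_id continuous_const)
        exact (hcont.tendsto B).comp htend
      have hent : ∀ i j, Tendsto (fun n => Bseq n i j) atTop (𝓝 (B i j)) := by
        intro i j
        exact tendsto_pi_nhds.mp (tendsto_pi_nhds.mp htend i) j
      have hdet_tend : Tendsto (fun n => (Bseq n).det) atTop (𝓝 B.det) :=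
        ((Continuous.matrix_det continuous_id).tendsto B).comp htend
      have hdet_lb : 4 / C ^ 2 ≤ B.det :=
        ge_of_tendsto hdet_tend (Filter.Eventually.of_forall fun n =>
          Ffun_det_lower f h hnonneg (hmem n).1 hC (hmem n).2)
      have hdet_pos : 0 < B.det := lt_of_lt_of_le (by positivity) hdet_lb
      have hherm : B.IsHermitian := by
        have hsym : ∀ i j, B j i = B i j := by
          intro i j
          refine tendsto_nhds_unique (hent j i) ?_
          have heqn : (fun n => Bseq n j i) = fun n => Bseq n i j := by
            funext n
            have hH := (hmem n).1.1
            have := congrFun (congrFun hH i) j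
            simpa [Matrix.conjTranspose_apply] using this
          rw [heqn]; exact hent i j
        show Bᴴ = B
        ext i j
        simp only [Matrix.conjTranspose_apply, star_trivial]
        exact hsym i j
      have hpsd : B.PosSemidef := by
        refine Matrix.PosSemidef.of_dotProduct_mulVec_nonneg hherm fun x => ?_
        have h0 : 0 ≤ quadForm B x :=
          ge_of_tendsto (hqtend x) (Filter.Eventually.of_forall fun n =>
            quadForm_nonneg (hmem n).1.posSemidef x)
        simpa [quadForm] using h0
      have hBpd : B.PosDef := posDef_of_posSemidef_det_ne_zero hpsd hdet_pos.ne'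
      -- convergence of Ffun
      have hsq_tend : Tendsto (fun n => Real.sqrt (Bseq n).det) atTop (𝓝 (Real.sqrt B.det)) :=
        (Real.continuous_sqrt.tendsto _).comp hdet_tend
      have hs_pos : 0 < Real.sqrt B.det := Real.sqrt_pos.mpr hdet_pos
      have hinv_tend : Tendsto (fun n => (Real.sqrt (Bseq n).det)⁻¹) atTop
          (𝓝 (Real.sqrt B.det)⁻¹) := hsq_tend.inv₀ hs_pos.ne'
      have hadj : ∀ A : Mat3, h ⬝ᵥ A⁻¹ *ᵥ h = (A.det)⁻¹ * (h ⬝ᵥ A.adjugate *ᵥ h) := by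
        intro A
        rw [Matrix.inv_def, Ring.inverse_eq_inv', Matrix.smul_mulVec,
          dotProduct_smul, smul_eq_mul]
      have hadjdot : Tendsto (fun n => h ⬝ᵥ (Bseq n).adjugate *ᵥ h) atTop
          (𝓝 (h ⬝ᵥ B.adjugate *ᵥ h)) :=
        ((Continuous.dotProduct continuous_const
          ((Continuous.matrix_adjugate continuous_id).matrix_mulVec
            continuous_const)).tendsto B).comp htend
      have hthird_tend : Tendsto (fun n => h ⬝ᵥ (Bseq n)⁻¹ *ᵥ h) atTop
          (𝓝 (h ⬝ᵥ B⁻¹ *ᵥ h)) := by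
        rw [hadj B]
        exact (((hdet_tend.inv₀ hdet_pos.ne').mul hadjdot)).congr fun n => (hadj (Bseq n)).symm
      have hK0 : 0 ≤ K := by positivity
      have hint_tend : Tendsto (fun n => ∫ p : Vec3, Real.sqrt (quadForm (Bseq n) p) * f p)
          atTop (𝓝 (∫ p : Vec3, Real.sqrt (quadForm B p) * f p)) := by
        apply tendsto_integral_of_dominated_convergence
          (bound := fun p : Vec3 => Real.sqrt K * (enorm3 p * f p))
          (fun n => aesm_sqrt f hmeas (Bseq n)) (hint.const_mul _)
        · intro n
          filter_upwards with p
          rw [Real.norm_eq_abs, abs_of_nonneg (mul_nonneg (Real.sqrt_nonneg _) (hnonneg p))]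
          have hb := key_bound_all f h m hmeas hnonneg hint hm hmpos hC (hmem n).1 (hmem n).2 p
          calc Real.sqrt (quadForm (Bseq n) p) * f p
              ≤ (Real.sqrt K * enorm3 p) * f p :=
                mul_le_mul_of_nonneg_right (sqrt_quadForm_le (Bseq n) p hK0 hb) (hnonneg p)
            _ = Real.sqrt K * (enorm3 p * f p) := by ring
        · filter_upwards with p
          exact ((Real.continuous_sqrt.tendsto _).comp (hqtend p)).mul_const (f p)
      have hFtend : Tendsto (fun n => Ffun f h (Bseq n)) atTop (𝓝 (Ffun f h B)) := by
        unfold Ffun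
        exact ((hint_tend.const_mul (16 * π)).add (hinv_tend.const_mul 2)).add
          (((hsq_tend.const_mul 4).mul hthird_tend))
      exact ⟨hBpd, le_of_tendsto hFtend (Filter.Eventually.of_forall fun n => (hmem n).2)⟩
    · -- subset of box
      intro B hB
      rw [Set.mem_setOf_eq]
      intro i j
      rw [Set.mem_Icc, ← abs_le]
      exact entry_bound f h m hmeas hnonneg hint hm hmpos hC hB.1 hB.2 i j
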